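/- Let n ≥ 1 and let f : ℝⁿ → ℝ be quasi-convex and upper semicontinuous. Then for every x ∈ ℝⁿ, the star subdifferential ∂*f(x) contains a nonzero element, i.e., ∂*f(x) \ {0} ≠ ∅. -/

import Mathlib

/-- The star subdifferential of `f` at `x`. -/
def starSubdiff {n : ℕ} (f : EuclideanSpace ℝ (Fin n) → ℝ) (x : EuclideanSpace ℝ (Fin n)) :
    Set (EuclideanSpace ℝ (Fin n)) :=
  {g | ∀ y : EuclideanSpace ℝ (Fin n), f y < f x → (inner ℝ g (y - x) : ℝ) ≤ 0}

/-- For a quasi-convex upper semicontinuous function on `ℝⁿ` (with `n ≥ 1`), the star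
subdifferential at every point contains a nonzero element. -/
theorem starSubdiff_nonzero_nonempty {n : ℕ} (hn : 1 ≤ n)
    (f : EuclideanSpace ℝ (Fin n) → ℝ)
    (hqc : ∀ lam : ℝ, Convex ℝ {y : EuclideanSpace ℝ (Fin n) | f y ≤ lam})
    (husc : ∀ lam : ℝ, IsOpen {y : EuclideanSpace ℝ (Fin n) | f y < lam})
    (x : EuclideanSpace ℝ (Fin n)) :
    ∃ g ∈ starSubdiff f x, g ≠ 0 := by
  set S : Set (EuclideanSpace ℝ (Fin n)) := {y | f y < f x} with hS
  by_cases hne : S.Nonempty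
  · -- S is convex
    have hconv : Convex ℝ S := by
      intro y₁ h₁ y₂ h₂ a b ha hb hab
      have hy₁ : f y₁ ≤ max (f y₁) (f y₂) := le_max_left _ _
      have hy₂ : f y₂ ≤ max (f y₁) (f y₂) := le_max_right _ _
      have := hqc (max (f y₁) (f y₂)) hy₁ hy₂ ha hb hab
      have hmax : max (f y₁) (f y₂) < f x := max_lt h₁ h₂
      exact lt_of_le_of_lt this hmax
    have hopen : IsOpen S := husc (f x)
    have hx : x ∉ S := by simp [hS]
    obtain ⟨φ, hφ⟩ := geometric_hahn_banach_open_point hconv hopen hx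
    set g : EuclideanSpace ℝ (Fin n) :=
      (InnerProductSpace.toDual ℝ (EuclideanSpace ℝ (Fin n))).symm φ with hg
    have hgφ : ∀ y, (inner ℝ g y : ℝ) = φ y := fun y => by
      simp [hg, ← InnerProductSpace.toDual_apply_apply]
    refine ⟨g, ?_, ?_⟩
    · intro y hy
      have := hφ y hy
      have : (inner ℝ g (y - x) : ℝ) = φ y - φ x := by
        rw [hgφ]; simp [map_sub]
      rw [this]
      linarith [hφ y hy]
    · obtain ⟨y₀, hy₀⟩ := hne
      intro h0
      have : φ y₀ < φ x := hφ y₀ hy₀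
      have e1 : (inner ℝ g y₀ : ℝ) = φ y₀ := hgφ y₀
      have e2 : (inner ℝ g x : ℝ) = φ x := hgφ x
      rw [h0] at e1 e2
      simp at e1 e2
      rw [← e1, ← e2] at this
      exact lt_irrefl _ this
  · -- strict sublevel set empty: any nonzero vector works
    refine ⟨EuclideanSpace.single ⟨0, hn⟩ 1, ?_, ?_⟩
    · intro y hy
      exact absurd ⟨y, hy⟩ hne
    · intro h
      have := congrFun (congrArg (fun v : EuclideanSpace ℝ (Fin n) => (v : Fin n → ℝ)) h) ⟨0, hn⟩
      simp at this
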